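/- For every k ≥ 5, the maximal size of a set (or multiset) of points in PG(k-1,2) such that every subspace of projective dimension k-3 (codimension 2) contains at most k-2 points equals k+1; i.e., m_2^{(k-3)}(k, k-2) = k+1. The lower bound is attained by a projective frame: the k points spanned by the unit vectors of F_2^k together with the point spanned by the all-ones vector. -/

import Mathlib

open Module

/-- Multiplicity of a subspace `S` with respect to a multiset of points `K` of `PG(k-1,2)`. -/
noncomputable def msMult {k : ℕ}
    (K : Submodule (ZMod 2) (Fin k → ZMod 2) → ℕ)
    (S : Submodule (ZMod 2) (Fin k → ZMod 2)) : ℕ :=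
  ∑ᶠ P ∈ {P : Submodule (ZMod 2) (Fin k → ZMod 2) | finrank (ZMod 2) P = 1 ∧ P ≤ S}, K P

open Classical in
/-- The projective frame of `PG(k-1,2)`: the points spanned by the `k` unit vectors of
`F_2^k` together with the point spanned by the all-ones vector, as a multiset. -/
noncomputable def frameK (k : ℕ) : Submodule (ZMod 2) (Fin k → ZMod 2) → ℕ :=
  fun P => if (∃ v ∈ (insert (fun _ => 1) (Set.range fun i => Pi.single i 1) :
      Set (Fin k → ZMod 2)), P = Submodule.span (ZMod 2) {v}) then 1 else 0


open Module Submodule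

namespace Stmt10Aux

variable {k : ℕ}

abbrev V (k : ℕ) := Fin k → ZMod 2

noncomputable instance : Finite (Submodule (ZMod 2) (V k)) :=
  Finite.of_injective (fun S => (S : Set (V k))) SetLike.coe_injective

noncomputable instance : DecidableEq (Submodule (ZMod 2) (V k)) := Classical.decEq _

lemma zmod2_cases (a : ZMod 2) : a = 0 ∨ a = 1 := by revert a; decide

lemma char2_add_self (v : V k) : v + v = 0 := by
  rw [← two_smul (ZMod 2)]
  have h2 : (2 : ZMod 2) = 0 := by decide
  rw [h2, zero_smul]

lemma mem_span_singleton_z2 {x v : V k} : x ∈ span (ZMod 2) {v} ↔ x = 0 ∨ x = v := by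
  rw [Submodule.mem_span_singleton]
  constructor
  · rintro ⟨a, rfl⟩
    rcases zmod2_cases a with h | h <;> subst h <;> simp
  · rintro (rfl | rfl)
    exacts [⟨0, by simp⟩, ⟨1, by simp⟩]

lemma span_singleton_inj {v w : V k} (hv : v ≠ 0) (_hw : w ≠ 0)
    (h : span (ZMod 2) {v} = span (ZMod 2) {w}) : v = w := by
  have : v ∈ span (ZMod 2) {w} := h ▸ mem_span_singleton_self v
  rcases mem_span_singleton_z2.1 this with h1 | h1
  · exact absurd h1 hv
  · exact h1

lemma point_eq_span {P : Submodule (ZMod 2) (V k)} (hP : finrank (ZMod 2) P = 1) :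
    ∃ v : V k, v ≠ 0 ∧ P = span (ZMod 2) {v} := by
  have hbot : P ≠ ⊥ := by
    intro h; rw [h] at hP; simp [finrank_bot] at hP
  obtain ⟨v, hvP, hv0⟩ := Submodule.exists_mem_ne_zero_of_ne_bot hbot
  refine ⟨v, hv0, ?_⟩
  have hle : span (ZMod 2) {v} ≤ P := by
    rw [span_le]; simpa using hvP
  have := Submodule.eq_of_le_of_finrank_le hle (by rw [hP, finrank_span_singleton hv0])
  exact this.symm

/-- The finset of points (`finrank = 1` submodules) contained in `S`. -/
noncomputable def pts (S : Submodule (ZMod 2) (V k)) : Finset (Submodule (ZMod 2) (V k)) :=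
  (Set.toFinite {P : Submodule (ZMod 2) (V k) | finrank (ZMod 2) P = 1 ∧ P ≤ S}).toFinset

lemma mem_pts {S P : Submodule (ZMod 2) (V k)} :
    P ∈ pts S ↔ finrank (ZMod 2) P = 1 ∧ P ≤ S := by
  simp [pts, Set.Finite.mem_toFinset]

lemma msMult_eq_sum (K : Submodule (ZMod 2) (V k) → ℕ) (S : Submodule (ZMod 2) (V k)) :
    msMult K S = ∑ P ∈ pts S, K P := by
  rw [msMult, ← finsum_mem_coe_finset]
  congr 1
  simp [pts, Set.Finite.coe_toFinset]

/-- Nonzero vectors of `S` as a finset. -/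
noncomputable def vecs (S : Submodule (ZMod 2) (V k)) : Finset (V k) :=
  (Set.toFinite {v : V k | v ∈ S ∧ v ≠ 0}).toFinset

lemma mem_vecs {S : Submodule (ZMod 2) (V k)} {v : V k} :
    v ∈ vecs S ↔ v ∈ S ∧ v ≠ 0 := by
  simp [vecs, Set.Finite.mem_toFinset]

lemma pts_eq_image (S : Submodule (ZMod 2) (V k)) :
    pts S = (vecs S).image (fun v => span (ZMod 2) {v}) := by
  ext P
  simp only [mem_pts, Finset.mem_image]
  constructor
  · rintro ⟨h1, h2⟩
    obtain ⟨v, hv0, rfl⟩ := point_eq_span h1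
    exact ⟨v, mem_vecs.2 ⟨h2 (mem_span_singleton_self v), hv0⟩, rfl⟩
  · rintro ⟨v, hv, rfl⟩
    rw [mem_vecs] at hv
    refine ⟨finrank_span_singleton hv.2, ?_⟩
    rw [span_le]; simpa using hv.1

lemma msMult_eq_vecsum (K : Submodule (ZMod 2) (V k) → ℕ) (S : Submodule (ZMod 2) (V k)) :
    msMult K S = ∑ v ∈ vecs S, K (span (ZMod 2) {v}) := by
  rw [msMult_eq_sum, pts_eq_image]
  rw [Finset.sum_image]
  intro x hx y hy h
  exact span_singleton_inj (mem_vecs.1 hx).2 (mem_vecs.1 hy).2 h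


lemma finrank_V (k : ℕ) : finrank (ZMod 2) (V k) = k := by
  rw [Module.finrank_pi]; simp

lemma finrank_sup_span_singleton {W : Submodule (ZMod 2) (V k)} {v : V k} (hv : v ∉ W) :
    finrank (ZMod 2) (W ⊔ span (ZMod 2) {v} : Submodule (ZMod 2) (V k))
      = finrank (ZMod 2) W + 1 := by
  have hv0 : v ≠ 0 := fun h => hv (h ▸ W.zero_mem)
  have hinf : W ⊓ span (ZMod 2) {v} = ⊥ := by
    rw [eq_bot_iff]
    rintro x ⟨hxW, hxv⟩
    rcases mem_span_singleton_z2.1 hxv with rfl | rfl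
    · exact Submodule.mem_bot _ |>.2 rfl
    · exact absurd hxW hv
  have h := Submodule.finrank_sup_add_finrank_inf_eq W (span (ZMod 2) {v})
  rw [hinf, finrank_bot, finrank_span_singleton hv0] at h
  omega

lemma exists_supmodule (d : ℕ) (hd : d ≤ k) :
    ∀ (n : ℕ) (W : Submodule (ZMod 2) (V k)), finrank (ZMod 2) W + n = d →
    ∃ S, W ≤ S ∧ finrank (ZMod 2) S = d := by
  intro n
  induction n with
  | zero => exact fun W h => ⟨W, le_rfl, by omega⟩
  | succ n ih =>
    intro W h
    have hW : W ≠ ⊤ := by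
      intro htop
      rw [htop, finrank_top, finrank_V] at h
      omega
    obtain ⟨v, _, hv⟩ := SetLike.exists_of_lt (show W < ⊤ from lt_top_iff_ne_top.2 hW)
    obtain ⟨S, hS1, hS2⟩ := ih (W ⊔ span (ZMod 2) {v})
      (by rw [finrank_sup_span_singleton hv]; omega)
    exact ⟨S, le_trans le_sup_left hS1, hS2⟩

/-- Every element of the span of a finset over `F₂` is a subset sum. -/
lemma span_finset_rep {B : Finset (V k)} {x : V k}
    (hx : x ∈ span (ZMod 2) (↑B : Set (V k))) :
    ∃ C ⊆ B, x = ∑ v ∈ C, v := by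
  rw [mem_span_finset] at hx
  obtain ⟨f, hf⟩ := hx
  classical
  refine ⟨B.filter (fun v => f v = 1), Finset.filter_subset _ _, ?_⟩
  rw [← hf.2, ← Finset.sum_filter_add_sum_filter_not B (fun v => f v = 1)]
  have h1 : ∑ v ∈ B.filter (fun v => f v = 1), f v • v
      = ∑ v ∈ B.filter (fun v => f v = 1), v := by
    apply Finset.sum_congr rfl
    intro v hv
    rw [Finset.mem_filter] at hv
    rw [hv.2, one_smul]
  have h2 : ∑ v ∈ B.filter (fun v => ¬ f v = 1), f v • v = 0 := by
    apply Finset.sum_eq_zero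
    intro v hv
    rw [Finset.mem_filter] at hv
    rcases zmod2_cases (f v) with h | h
    · rw [h, zero_smul]
    · exact absurd h hv.2
  rw [h1, h2, add_zero]

lemma sum_subset_mem_span {B C : Finset (V k)} (h : C ⊆ B) :
    (∑ v ∈ C, v) ∈ span (ZMod 2) (↑B : Set (V k)) := by
  apply Submodule.sum_mem
  intro v hv
  exact subset_span (h hv)

lemma sum_add_sum_eq_symmdiff [DecidableEq (V k)] (C C' : Finset (V k)) :
    (∑ v ∈ C, v) + (∑ v ∈ C', v) = ∑ v ∈ (C ∪ C') \ (C ∩ C'), v := by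
  have h1 := Finset.sum_union_inter (s₁ := C) (s₂ := C') (f := fun v : V k => v)
  have h2 : ∑ v ∈ C ∪ C', v
      = ∑ v ∈ (C ∪ C') \ (C ∩ C'), v + ∑ v ∈ C ∩ C', v :=
    (Finset.sum_sdiff (Finset.inter_subset_union)).symm
  have key : (∑ v ∈ C, v) + (∑ v ∈ C', v)
      = ∑ v ∈ (C ∪ C') \ (C ∩ C'), v + ((∑ v ∈ C ∩ C', v) + (∑ v ∈ C ∩ C', v)) := by
    rw [← h1, h2]; abel
  rw [key, char2_add_self, add_zero]

lemma sdiff_rep {B C : Finset (V k)} [DecidableEq (V k)] (h : C ⊆ B) :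
    (∑ v ∈ B, v) + (∑ v ∈ C, v) = ∑ v ∈ B \ C, v := by
  rw [← Finset.sum_sdiff h]
  rw [add_assoc, char2_add_self, add_zero]

lemma pickA {α : Type*} [DecidableEq α] (m : ℕ) (hm : 1 ≤ m) :
    ∀ (j : ℕ) (s : Finset α) (g : α → ℕ), (∀ v ∈ s, 1 ≤ g v) →
    s.card ≤ m + j → m + 1 + j ≤ ∑ v ∈ s, g v →
    ∃ T ⊆ s, T.card ≤ m ∧ m + 1 ≤ ∑ v ∈ T, g v := by
  intro j
  induction j with
  | zero =>
    intro s g _ hcard hsum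
    exact ⟨s, Finset.Subset.refl s, by omega, by omega⟩
  | succ j ih =>
    intro s g hg hcard hsum
    by_cases hc : s.card ≤ m + j
    · exact ih s g hg hc (by omega)
    · push_neg at hc
      by_cases h2 : ∀ v ∈ s, 2 ≤ g v
      · obtain ⟨T, hTs, hTcard⟩ := Finset.exists_subset_card_eq (show m ≤ s.card by omega)
        refine ⟨T, hTs, by omega, ?_⟩
        calc m + 1 ≤ 2 * m := by omega
        _ = ∑ _v ∈ T, 2 := by rw [Finset.sum_const, hTcard]; ring
        _ ≤ ∑ v ∈ T, g v := Finset.sum_le_sum (fun v hv => h2 v (hTs hv))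
      · push_neg at h2
        obtain ⟨v, hvs, hv2⟩ := h2
        have hv1 : g v = 1 := by have := hg v hvs; omega
        have herase := Finset.sum_erase_add s g hvs
        obtain ⟨T, hT1, hT2, hT3⟩ := ih (s.erase v) g
          (fun w hw => hg w (Finset.mem_of_mem_erase hw))
          (by rw [Finset.card_erase_of_mem hvs]; omega)
          (by omega)
        exact ⟨T, hT1.trans (Finset.erase_subset v s), hT2, hT3⟩

lemma finrank_span_singleton_le (x : V k) :
    finrank (ZMod 2) (span (ZMod 2) {x} : Submodule (ZMod 2) (V k)) ≤ 1 := by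
  rcases eq_or_ne x 0 with rfl | hx
  · rw [Submodule.span_zero_singleton]; simp [finrank_bot]
  · rw [finrank_span_singleton hx]

lemma finrank_sup_le (A B : Submodule (ZMod 2) (V k)) :
    finrank (ZMod 2) (A ⊔ B : Submodule (ZMod 2) (V k))
      ≤ finrank (ZMod 2) A + finrank (ZMod 2) B := by
  have := Submodule.finrank_sup_add_finrank_inf_eq A B
  omega

lemma finrank_span_insert_le (x : V k) (T : Finset (V k)) [DecidableEq (V k)] :
    finrank (ZMod 2) (span (ZMod 2) (↑(insert x T) : Set (V k)))
      ≤ finrank (ZMod 2) (span (ZMod 2) (↑T : Set (V k))) + 1 := by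
  rw [Finset.coe_insert, Submodule.span_insert]
  have h1 := finrank_sup_le (span (ZMod 2) {x}) (span (ZMod 2) (↑T : Set (V k)))
  have h2 := finrank_span_singleton_le (k := k) x
  omega

lemma pad (hk : 5 ≤ k) (supp : Finset (V k)) (hbig : k - 1 ≤ supp.card) :
    ∀ (n : ℕ) (T : Finset (V k)), T ⊆ supp → T.card + n = k - 1 →
    finrank (ZMod 2) (span (ZMod 2) (↑T : Set (V k))) + n ≤ k - 2 →
    ∃ T' ⊆ supp, T'.card = k - 1 ∧
      finrank (ZMod 2) (span (ZMod 2) (↑T' : Set (V k))) ≤ k - 2 := by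
  classical
  intro n
  induction n with
  | zero => exact fun T hTs hTc hTr => ⟨T, hTs, by omega, by omega⟩
  | succ n ih =>
    intro T hTs hTc hTr
    have hex : ∃ x ∈ supp, x ∉ T := by
      by_contra hno
      push_neg at hno
      have : supp ⊆ T := hno
      have := Finset.card_le_card this
      omega
    obtain ⟨x, hxs, hxT⟩ := hex
    refine ih (insert x T) ?_ ?_ ?_
    · intro y hy
      rcases Finset.mem_insert.1 hy with rfl | hy
      · exact hxs
      · exact hTs hy
    · rw [Finset.card_insert_of_notMem hxT]; omega
    · have := finrank_span_insert_le x T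
      omega

lemma char2_shift {a b c : V k} (h : a + b = c) : a = b + c := by
  rw [← h, add_comm a b, ← add_assoc, char2_add_self, zero_add]

lemma char2_shift' {a b c : V k} (h : a + b = c) : b = a + c := by
  rw [add_comm] at h; exact char2_shift h

lemma hyperplane_add_mem (hk : 1 ≤ k) {W : Submodule (ZMod 2) (V k)}
    (hW : finrank (ZMod 2) W = k - 1) {u x : V k} (hu : u ∉ W) (hx : x ∉ W) :
    u + x ∈ W := by
  have htop : W ⊔ span (ZMod 2) {u} = ⊤ := by
    apply Submodule.eq_top_of_finrank_eq
    rw [finrank_sup_span_singleton hu, hW, finrank_V]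
    omega
  have hxmem : x ∈ W ⊔ span (ZMod 2) {u} := htop ▸ Submodule.mem_top
  rw [Submodule.mem_sup] at hxmem
  obtain ⟨y, hy, z, hz, hyz⟩ := hxmem
  rcases mem_span_singleton_z2.1 hz with rfl | h
  · rw [add_zero] at hyz; exact absurd (hyz ▸ hy) hx
  · rw [h] at hyz
    have : u + x = y := by
      rw [← hyz, add_comm y u, ← add_assoc, char2_add_self, zero_add]
    exact this ▸ hy

lemma dep_to_T (hk : 5 ≤ k) (supp : Finset (V k)) (hcard : k + 2 ≤ supp.card)
    (d : V k) (D0 : Finset (V k)) (hdsupp : d ∈ supp) (hD0supp : D0 ⊆ supp) (hdD0 : d ∉ D0)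
    (hspan : d ∈ span (ZMod 2) (↑D0 : Set (V k))) (hD0card : D0.card ≤ k - 2) :
    ∃ T ⊆ supp, T.card = k - 1 ∧
      finrank (ZMod 2) (span (ZMod 2) (↑T : Set (V k))) ≤ k - 2 := by
  classical
  have hspanT : span (ZMod 2) (↑(insert d D0) : Set (V k))
      = span (ZMod 2) (↑D0 : Set (V k)) := by
    rw [Finset.coe_insert, Submodule.span_insert]
    rw [sup_eq_right.2 ((Submodule.span_singleton_le_iff_mem d _).2 hspan)]
  have hD0rank : finrank (ZMod 2) (span (ZMod 2) (↑D0 : Set (V k))) ≤ D0.card := by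
    have := finrank_span_le_card (R := ZMod 2) (↑D0 : Set (V k))
    simpa using this
  have hTcard : (insert d D0).card = D0.card + 1 := Finset.card_insert_of_notMem hdD0
  apply pad hk supp (by omega) (k - 1 - (D0.card + 1)) (insert d D0)
  · intro y hy
    rcases Finset.mem_insert.1 hy with rfl | hy
    · exact hdsupp
    · exact hD0supp hy
  · omega
  · rw [hspanT]; omega

lemma existsDepSubset (hk : 5 ≤ k) (supp : Finset (V k))
    (hcard : k + 2 ≤ supp.card) :
    ∃ T ⊆ supp, T.card = k - 1 ∧
      finrank (ZMod 2) (span (ZMod 2) (↑T : Set (V k))) ≤ k - 2 := by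
  classical
  by_cases hr : finrank (ZMod 2) (span (ZMod 2) (↑supp : Set (V k))) ≤ k - 2
  · obtain ⟨T, hT, hTc⟩ := Finset.exists_subset_card_eq
      (show k - 1 ≤ supp.card by omega)
    exact ⟨T, hT, hTc,
      le_trans (Submodule.finrank_mono (Submodule.span_mono (by exact_mod_cast hT))) hr⟩
  · push_neg at hr
    obtain ⟨b, hbsub, hbspan, hbli⟩ := exists_linearIndependent (ZMod 2) (↑supp : Set (V k))
    have hbfin : b.Finite := (supp.finite_toSet).subset hbsub
    haveI := hbfin.fintype
    have hbcard : k - 1 ≤ b.toFinset.card := by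
      rw [← finrank_span_set_eq_card hbli, hbspan]
      omega
    obtain ⟨B, hBb, hBcard⟩ := Finset.exists_subset_card_eq hbcard
    have hBbset : (↑B : Set (V k)) ⊆ b := by
      intro x hx; rw [← Set.mem_toFinset]; exact hBb hx
    have hBsupp : B ⊆ supp := fun x hx => by
      have := hbsub (hBbset hx); exact_mod_cast this
    have hBli : LinearIndependent (ZMod 2) (Subtype.val : (↑B : Set (V k)) → V k) :=
      LinearIndepOn.mono (R := ZMod 2) (v := id) hbli hBbset
    set W := span (ZMod 2) (↑B : Set (V k)) with hWdef
    have hWrank : finrank (ZMod 2) W = k - 1 := by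
      rw [hWdef, finrank_span_set_eq_card hBli]
      simpa using hBcard
    set others := supp \ B with hothers
    have hoth : 3 ≤ others.card := by
      rw [hothers, Finset.card_sdiff_of_subset hBsupp]
      omega
    have hothsupp : others ⊆ supp := Finset.sdiff_subset
    have hothB : ∀ u ∈ others, u ∉ B := fun u hu => (Finset.mem_sdiff.1 hu).2
    -- main goal via (d, D0)
    suffices hsuff : ∃ d, ∃ D0 : Finset (V k), d ∈ supp ∧ D0 ⊆ supp ∧ d ∉ D0 ∧
        d ∈ span (ZMod 2) (↑D0 : Set (V k)) ∧ D0.card ≤ k - 2 by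
      obtain ⟨d, D0, h1, h2, h3, h4, h5⟩ := hsuff
      exact dep_to_T hk supp hcard d D0 h1 h2 h3 h4 h5
    by_cases hcase : ∃ u ∈ others, ∃ C ⊆ B, u = ∑ v ∈ C, v ∧ C.card ≤ k - 2
    · obtain ⟨u, hu, C, hCB, hrep, hCcard⟩ := hcase
      refine ⟨u, C, hothsupp hu, hCB.trans hBsupp, fun h => hothB u hu (hCB h), ?_, hCcard⟩
      rw [hrep]
      exact sum_subset_mem_span (Finset.Subset.refl C)
    · push_neg at hcase
      have hWmem : ∀ u ∈ others, u ∈ W → u = ∑ v ∈ B, v := by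
        intro u hu huW
        obtain ⟨C, hCB, hrep⟩ := span_finset_rep huW
        have hCc := hcase u hu C hCB hrep
        have hCB' : C = B := Finset.eq_of_subset_of_card_le hCB (by omega)
        rw [hrep, hCB']
      have hWfil : (others.filter (fun v => v ∈ W)).card ≤ 1 := by
        apply Finset.card_le_one.2
        intro a ha b hb
        rw [Finset.mem_filter] at ha hb
        rw [hWmem a ha.1 ha.2, hWmem b hb.1 hb.2]
      have hfilsum := Finset.card_filter_add_card_filter_not
        (s := others) (p := fun v => v ∈ W)
      have hNW : 2 ≤ (others.filter (fun v => ¬ v ∈ W)).card := by omega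
      obtain ⟨u1, hu1, u2, hu2, h12⟩ := Finset.one_lt_card.1 (by omega :
        1 < (others.filter (fun v => ¬ v ∈ W)).card)
      rw [Finset.mem_filter] at hu1 hu2
      have hadd : ∀ x y : V k, x ∉ W → y ∉ W → x + y ∈ W :=
        fun x y hx hy => hyperplane_add_mem (by omega) hWrank hx hy
      obtain ⟨C12, hC12B, hrep12⟩ := span_finset_rep (hadd u1 u2 hu1.2 hu2.2)
      by_cases hsmall12 : C12.card ≤ k - 3
      · -- d := u1, D0 := insert u2 C12
        refine ⟨u1, insert u2 C12, hothsupp hu1.1, ?_, ?_, ?_, ?_⟩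
        · intro y hy
          rcases Finset.mem_insert.1 hy with rfl | hy
          · exact hothsupp hu2.1
          · exact hBsupp (hC12B hy)
        · intro h
          rcases Finset.mem_insert.1 h with h | h
          · exact h12 h
          · exact hothB u1 hu1.1 (hC12B h)
        · have : u1 = u2 + ∑ v ∈ C12, v := char2_shift hrep12
          rw [this, Finset.coe_insert]
          exact Submodule.add_mem _ (subset_span (Set.mem_insert u2 _))
            (Submodule.span_mono (Set.subset_insert u2 _) (sum_subset_mem_span (Finset.Subset.refl C12)))
        · have := Finset.card_insert_le u2 C12
          omega
      · by_cases h3 : ∃ u3 ∈ others.filter (fun v => ¬ v ∈ W), u3 ≠ u1 ∧ u3 ≠ u2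
        · obtain ⟨u3, hu3, h31, h32⟩ := h3
          rw [Finset.mem_filter] at hu3
          obtain ⟨C13, hC13B, hrep13⟩ := span_finset_rep (hadd u1 u3 hu1.2 hu3.2)
          by_cases hsmall13 : C13.card ≤ k - 3
          · refine ⟨u1, insert u3 C13, hothsupp hu1.1, ?_, ?_, ?_, ?_⟩
            · intro y hy
              rcases Finset.mem_insert.1 hy with rfl | hy
              · exact hothsupp hu3.1
              · exact hBsupp (hC13B hy)
            · intro h
              rcases Finset.mem_insert.1 h with h | h
              · exact h31 h.symm
              · exact hothB u1 hu1.1 (hC13B h)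
            · have : u1 = u3 + ∑ v ∈ C13, v := char2_shift hrep13
              rw [this, Finset.coe_insert]
              exact Submodule.add_mem _ (subset_span (Set.mem_insert u3 _))
                (Submodule.span_mono (Set.subset_insert u3 _)
                  (sum_subset_mem_span (Finset.Subset.refl C13)))
            · have := Finset.card_insert_le u3 C13
              omega
          · -- both big: use symmetric difference
            set C23 := (C12 ∪ C13) \ (C12 ∩ C13) with hC23
            have hrep23 : u2 + u3 = ∑ v ∈ C23, v := by
              have hsum : (u1 + u2) + (u1 + u3) = u2 + u3 := by
                rw [show (u1 + u2) + (u1 + u3) = (u1 + u1) + (u2 + u3) by abel,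
                  char2_add_self, zero_add]
              rw [← hsum, hrep12, hrep13, sum_add_sum_eq_symmdiff]
            have hC23B : C23 ⊆ B :=
              (Finset.sdiff_subset).trans (Finset.union_subset hC12B hC13B)
            have hC23card : C23.card ≤ 2 := by
              have h1 := Finset.card_union_add_card_inter C12 C13
              have h2 := Finset.card_sdiff_of_subset
                (Finset.inter_subset_union (s := C12) (t := C13))
              have h4 : (C12 ∪ C13).card ≤ k - 1 := by
                rw [← hBcard]
                exact Finset.card_le_card (Finset.union_subset hC12B hC13B)
              have h5 : C12.card ≤ k - 1 := by
                rw [← hBcard]; exact Finset.card_le_card hC12B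
              have h6 : C13.card ≤ k - 1 := by
                rw [← hBcard]; exact Finset.card_le_card hC13B
              rw [← hC23] at h2
              omega
            refine ⟨u2, insert u3 C23, hothsupp hu2.1, ?_, ?_, ?_, ?_⟩
            · intro y hy
              rcases Finset.mem_insert.1 hy with rfl | hy
              · exact hothsupp hu3.1
              · exact hBsupp (hC23B hy)
            · intro h
              rcases Finset.mem_insert.1 h with h | h
              · exact h32 h.symm
              · exact hothB u2 hu2.1 (hC23B h)
            · have : u2 = u3 + ∑ v ∈ C23, v := char2_shift hrep23
              rw [this, Finset.coe_insert]
              exact Submodule.add_mem _ (subset_span (Set.mem_insert u3 _))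
                (Submodule.span_mono (Set.subset_insert u3 _)
                  (sum_subset_mem_span (Finset.Subset.refl C23)))
            · have := Finset.card_insert_le u3 C23
              omega
        · -- no third point outside W
          push_neg at h3
          have hsubNW : others.filter (fun v => ¬ v ∈ W) ⊆ {u1, u2} := by
            intro x hx
            rcases eq_or_ne x u1 with rfl | hx1
            · simp
            · have := h3 x hx hx1
              simp [this]
          have hNWle : (others.filter (fun v => ¬ v ∈ W)).card ≤ 2 :=
            le_trans (Finset.card_le_card hsubNW)
              (le_trans (Finset.card_insert_le _ _) (by simp))
          have hex0 : ∃ u0 ∈ others, u0 ∈ W := by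
            by_contra hno
            push_neg at hno
            have hsub : others ⊆ others.filter (fun v => ¬ v ∈ W) :=
              fun x hx => Finset.mem_filter.2 ⟨hx, hno x hx⟩
            have := Finset.card_le_card hsub
            omega
          obtain ⟨u0, hu0oth, hu0W⟩ := hex0
          have hu0 : u0 ∈ others ∧ u0 ∈ W := ⟨hu0oth, hu0W⟩
          have hu0B : u0 = ∑ v ∈ B, v := hWmem u0 hu0.1 hu0.2
          set R := B \ C12 with hR
          have hRcard : R.card ≤ 1 := by
            rw [hR, Finset.card_sdiff_of_subset hC12B]
            have h5 : C12.card ≤ k - 1 := by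
              rw [← hBcard]; exact Finset.card_le_card hC12B
            omega
          have hrepR : (∑ v ∈ B, v) + (∑ v ∈ C12, v) = ∑ v ∈ R, v := sdiff_rep hC12B
          -- u1 = u2 + (u0 + Σ_R)
          have hkey : u1 = u2 + (u0 + ∑ v ∈ R, v) := by
            have h1 : u1 = u2 + ∑ v ∈ C12, v := char2_shift hrep12
            have h2 : (∑ v ∈ C12, v) = (∑ v ∈ B, v) + ∑ v ∈ R, v := char2_shift' hrepR
            rw [h1, h2, ← hu0B]
          refine ⟨u1, insert u2 (insert u0 R), hothsupp hu1.1, ?_, ?_, ?_, ?_⟩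
          · intro y hy
            rcases Finset.mem_insert.1 hy with rfl | hy
            · exact hothsupp hu2.1
            · rcases Finset.mem_insert.1 hy with rfl | hy
              · exact hothsupp hu0.1
              · exact hBsupp ((Finset.sdiff_subset) hy)
          · intro h
            rcases Finset.mem_insert.1 h with h | h
            · exact h12 h
            · rcases Finset.mem_insert.1 h with h | h
              · exact hu1.2 (h ▸ hu0.2)
              · exact hothB u1 hu1.1 ((Finset.sdiff_subset) h)
          · rw [hkey, Finset.coe_insert, Finset.coe_insert]
            refine Submodule.add_mem _ (subset_span (Set.mem_insert u2 _)) ?_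
            refine Submodule.add_mem _
              (subset_span (Set.mem_insert_of_mem u2 (Set.mem_insert u0 _))) ?_
            refine Submodule.sum_mem _ (fun v hv => subset_span ?_)
            exact Set.mem_insert_of_mem u2 (Set.mem_insert_of_mem u0 hv)
          · have h1 := Finset.card_insert_le u2 (insert u0 R)
            have h2 := Finset.card_insert_le u0 R
            omega

lemma finrank_span_finset_le' (T : Finset (V k)) :
    finrank (ZMod 2) (span (ZMod 2) (↑T : Set (V k))) ≤ T.card := by
  have := finrank_span_le_card (R := ZMod 2) (↑T : Set (V k))
  simpa using this

lemma upper_bound (hk : 5 ≤ k) (K : Submodule (ZMod 2) (V k) → ℕ)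
    (hK : ∀ S : Submodule (ZMod 2) (V k), finrank (ZMod 2) S = k - 2 →
      msMult K S ≤ k - 2) :
    msMult K ⊤ ≤ k + 1 := by
  classical
  rw [msMult_eq_vecsum]
  by_contra hbig
  push_neg at hbig
  set f : V k → ℕ := fun v => K (span (ZMod 2) {v}) with hf
  set A := vecs (⊤ : Submodule (ZMod 2) (V k)) with hA
  set supp := A.filter (fun v => f v ≠ 0) with hsupp
  have hsum : ∑ v ∈ supp, f v = ∑ v ∈ A, f v := Finset.sum_filter_ne_zero A
  have hbig2 : k + 2 ≤ ∑ v ∈ A, f v := by exact_mod_cast hbig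
  have h0 : ∀ v ∈ supp, v ≠ 0 := fun v hv =>
    (mem_vecs.1 (Finset.mem_filter.1 hv).1).2
  have h1 : ∀ v ∈ supp, 1 ≤ f v := fun v hv => by
    have := (Finset.mem_filter.1 hv).2; omega
  have contra : ∀ T : Finset (V k), T ⊆ supp →
      finrank (ZMod 2) (span (ZMod 2) (↑T : Set (V k))) ≤ k - 2 →
      ∑ v ∈ T, f v ≤ k - 2 := by
    intro T hTs hTr
    obtain ⟨S, hWS, hSrank⟩ := exists_supmodule (k - 2) (by omega)
      (k - 2 - finrank (ZMod 2) (span (ZMod 2) (↑T : Set (V k))))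
      (span (ZMod 2) (↑T : Set (V k))) (by omega)
    have hTsub : T ⊆ vecs S := fun v hv =>
      mem_vecs.2 ⟨hWS (subset_span (Finset.mem_coe.2 hv)), h0 v (hTs hv)⟩
    calc ∑ v ∈ T, f v ≤ ∑ v ∈ vecs S, f v :=
          Finset.sum_le_sum_of_subset hTsub
    _ = msMult K S := (msMult_eq_vecsum K S).symm
    _ ≤ k - 2 := hK S hSrank
  by_cases hsc : supp.card ≤ k + 1
  · obtain ⟨T, hTs, hTc, hTsum⟩ := pickA (k - 2) (by omega) 3 supp f h1
      (by omega) (by omega)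
    have := contra T hTs (le_trans (finrank_span_finset_le' T) hTc)
    omega
  · push_neg at hsc
    obtain ⟨T, hTs, hTc, hTr⟩ := existsDepSubset hk supp (by omega)
    have hTsum : k - 1 ≤ ∑ v ∈ T, f v := by
      calc k - 1 = ∑ _v ∈ T, 1 := by rw [Finset.sum_const, hTc]; ring
      _ ≤ ∑ v ∈ T, f v := Finset.sum_le_sum (fun v hv => h1 v (hTs hv))
    have := contra T hTs hTr
    omega

/-- The frame as a set of vectors. -/
def Fr (k : ℕ) : Set (V k) :=
  insert (fun _ => 1) (Set.range fun i => Pi.single i 1)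

noncomputable def sing (i : Fin k) : V k := Pi.single i 1

noncomputable def oneV (k : ℕ) : V k := fun _ => 1

lemma mem_Fr {v : V k} : v ∈ Fr k ↔ v = oneV k ∨ ∃ i, v = sing i := by
  simp only [Fr, oneV, sing, Set.mem_insert_iff, Set.mem_range, eq_comm]
  rfl

lemma sing_ne_zero (i : Fin k) : sing i ≠ 0 := by
  intro h
  have := congrFun h i
  simp [sing] at this

lemma oneV_ne_zero (hk : 1 ≤ k) : oneV k ≠ 0 := by
  intro h
  have := congrFun h ⟨0, by omega⟩
  simp [oneV] at this

lemma sing_injective : Function.Injective (sing (k := k)) := by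
  intro i j h
  by_contra hij
  have := congrFun h i
  rw [sing, sing, Pi.single_eq_same, Pi.single_eq_of_ne hij] at this
  exact one_ne_zero this

lemma oneV_ne_sing (hk : 2 ≤ k) (i : Fin k) : oneV k ≠ sing i := by
  intro h
  have hj : ∃ j : Fin k, j ≠ i := by
    rcases eq_or_ne i ⟨0, by omega⟩ with rfl | hi
    · exact ⟨⟨1, by omega⟩, by intro hh; exact absurd (congrArg Fin.val hh) (by simp)⟩
    · exact ⟨⟨0, by omega⟩, fun hh => hi hh.symm⟩
  obtain ⟨j, hji⟩ := hj
  have := congrFun h j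
  rw [oneV, sing, Pi.single_eq_of_ne hji] at this
  exact one_ne_zero this

lemma Fr_nonzero (hk : 2 ≤ k) {v : V k} (hv : v ∈ Fr k) : v ≠ 0 := by
  rcases mem_Fr.1 hv with rfl | ⟨i, rfl⟩
  · exact oneV_ne_zero (by omega)
  · exact sing_ne_zero i

open Classical in
lemma frameK_apply (hk : 2 ≤ k) {v : V k} (hv : v ≠ 0) :
    frameK k (span (ZMod 2) {v}) = if v ∈ Fr k then 1 else 0 := by
  rw [frameK]
  refine if_congr ?_ rfl rfl
  constructor
  · rintro ⟨w, hw, hspan⟩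
    have hw' : (w : V k) ∈ Fr k := hw
    have := span_singleton_inj hv (Fr_nonzero hk hw') hspan
    rwa [this]
  · intro h
    exact ⟨v, h, rfl⟩

open Classical in
lemma msMult_frameK (hk : 2 ≤ k) (S : Submodule (ZMod 2) (V k)) :
    msMult (frameK k) S = ((vecs S).filter (fun v => v ∈ Fr k)).card := by
  classical
  rw [msMult_eq_vecsum]
  rw [Finset.sum_congr rfl (fun v hv => frameK_apply hk (mem_vecs.1 hv).2)]
  exact_mod_cast Finset.sum_boole _ _

lemma singles_li (I : Finset (Fin k)) :
    LinearIndependent (ZMod 2)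
      (Subtype.val : (sing '' (↑I : Set (Fin k)) : Set (V k)) → V k) := by
  classical
  have hlb : LinearIndependent (ZMod 2) (fun i : Fin k => sing i) := by
    have h := (Pi.basisFun (ZMod 2) (Fin k)).linearIndependent
    have he : (fun i : Fin k => sing i) = fun i => Pi.basisFun (ZMod 2) (Fin k) i := by
      funext i; rw [Pi.basisFun_apply]; rfl
    rw [he]; exact h
  have h2 := hlb.comp (Subtype.val : (↑I : Set (Fin k)) → Fin k) Subtype.val_injective
  have h3 := h2.linearIndepOn_id
  have he2 : Set.range ((fun i : Fin k => sing i) ∘ (Subtype.val : (↑I : Set (Fin k)) → Fin k))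
      = sing '' (↑I : Set (Fin k)) := by
    rw [Set.image_eq_range]; rfl
  rwa [he2] at h3

lemma frame_rank (hk : 5 ≤ k) (G : Finset (V k)) (hG : ↑G ⊆ Fr k) (hc : G.card = k - 1) :
    k - 1 ≤ finrank (ZMod 2) (span (ZMod 2) (↑G : Set (V k))) := by
  classical
  by_cases hone : oneV k ∈ G
  · -- all-ones vector in G
    set G' := G.erase (oneV k) with hG'
    have hc' : G'.card = k - 2 := by
      rw [hG', Finset.card_erase_of_mem hone, hc]
      omega
    have hGsing' : ∀ v ∈ G', ∃ i, v = sing i := by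
      intro v hv
      have hvG : v ∈ G := Finset.mem_of_mem_erase hv
      have hvne : v ≠ oneV k := Finset.ne_of_mem_erase hv
      rcases mem_Fr.1 (hG hvG) with rfl | h
      · exact absurd rfl hvne
      · exact h
    set I := Finset.univ.filter (fun i => sing i ∈ G') with hI
    have hG'im : G' = I.image sing := by
      ext v
      simp only [hI, Finset.mem_image, Finset.mem_filter, Finset.mem_univ, true_and]
      constructor
      · intro hv
        obtain ⟨i, rfl⟩ := hGsing' v hv
        exact ⟨i, hv, rfl⟩
      · rintro ⟨i, hi, rfl⟩; exact hi
    have hIcard : I.card = k - 2 := by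
      have := Finset.card_image_of_injective I (sing_injective (k := k))
      rw [← hG'im] at this
      omega
    have hj : ∃ j, j ∉ I := by
      by_contra hno
      push_neg at hno
      have : I = Finset.univ := Finset.eq_univ_iff_forall.2 hno
      rw [this, Finset.card_univ, Fintype.card_fin] at hIcard
      omega
    obtain ⟨j, hj⟩ := hj
    have hli' : LinearIndependent (ZMod 2)
        (Subtype.val : (↑G' : Set (V k)) → V k) := by
      have := singles_li (k := k) I
      rw [← Finset.coe_image, ← hG'im] at this
      exact this
    have hnot : oneV k ∉ span (ZMod 2) (↑G' : Set (V k)) := by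
      intro hmem
      have hle : span (ZMod 2) (↑G' : Set (V k)) ≤
          LinearMap.ker (LinearMap.proj (R := ZMod 2) (φ := fun _ : Fin k => ZMod 2) j) := by
        rw [span_le]
        intro v hv
        obtain ⟨i, rfl⟩ := hGsing' v hv
        have hiI : i ∈ I := by
          rw [hI, Finset.mem_filter]
          exact ⟨Finset.mem_univ i, hv⟩
        have hji : j ≠ i := fun hh => hj (hh ▸ hiI)
        simp only [SetLike.mem_coe, LinearMap.mem_ker, LinearMap.proj_apply]
        exact Pi.single_eq_of_ne hji 1
      have hker := hle hmem
      simp only [LinearMap.mem_ker, LinearMap.proj_apply] at hker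
      exact one_ne_zero ((show oneV k j = 1 from rfl) ▸ hker)
    have hli : LinearIndependent (ZMod 2)
        (Subtype.val : (insert (oneV k) (↑G' : Set (V k)) : Set (V k)) → V k) :=
      LinearIndepOn.id_insert (K := ZMod 2) hli' hnot
    have hGeq : (↑G : Set (V k)) = insert (oneV k) (↑G' : Set (V k)) := by
      rw [← Finset.coe_insert, hG', Finset.insert_erase hone]
    have hli2 : LinearIndependent (ZMod 2)
        (Subtype.val : (↑G : Set (V k)) → V k) := by
      rw [hGeq]; exact hli
    rw [finrank_span_set_eq_card (s := (↑G : Set (V k))) hli2]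
    simp [hc]
  · -- all of G consists of unit vectors
    have hGsing : ∀ v ∈ G, ∃ i, v = sing i := by
      intro v hv
      rcases mem_Fr.1 (hG hv) with rfl | h
      · exact absurd hv hone
      · exact h
    set I := Finset.univ.filter (fun i => sing i ∈ G) with hI
    have hGim : G = I.image sing := by
      ext v
      simp only [hI, Finset.mem_image, Finset.mem_filter, Finset.mem_univ, true_and]
      constructor
      · intro hv
        obtain ⟨i, rfl⟩ := hGsing v hv
        exact ⟨i, hv, rfl⟩
      · rintro ⟨i, hi, rfl⟩; exact hi
    have hli2 : LinearIndependent (ZMod 2)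
        (Subtype.val : (↑G : Set (V k)) → V k) := by
      have := singles_li (k := k) I
      rw [← Finset.coe_image, ← hGim] at this
      exact this
    rw [finrank_span_set_eq_card (s := (↑G : Set (V k))) hli2]
    simp [hc]

open Classical in
lemma frame_constraint (hk : 5 ≤ k) (S : Submodule (ZMod 2) (V k))
    (hS : finrank (ZMod 2) S = k - 2) : msMult (frameK k) S ≤ k - 2 := by
  rw [msMult_frameK (by omega)]
  by_contra h
  push_neg at h
  obtain ⟨G, hGsub, hGcard⟩ := Finset.exists_subset_card_eq
    (show k - 1 ≤ ((vecs S).filter (fun v => v ∈ Fr k)).card by omega)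
  have hGFr : (↑G : Set (V k)) ⊆ Fr k := fun v hv =>
    (Finset.mem_filter.1 (hGsub hv)).2
  have hrank := frame_rank hk G hGFr hGcard
  have hGS : span (ZMod 2) (↑G : Set (V k)) ≤ S := by
    rw [span_le]
    intro v hv
    exact (mem_vecs.1 (Finset.mem_filter.1 (hGsub hv)).1).1
  have := Submodule.finrank_mono hGS
  omega

open Classical in
lemma frame_total (hk : 5 ≤ k) : msMult (frameK k) ⊤ = k + 1 := by
  rw [msMult_frameK (show 2 ≤ k by omega)]
  have heq : (vecs (⊤ : Submodule (ZMod 2) (V k))).filter (fun v => v ∈ Fr k)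
      = insert (oneV k) (Finset.univ.image sing) := by
    ext v
    simp only [Finset.mem_filter, mem_vecs, Submodule.mem_top, true_and,
      Finset.mem_insert, Finset.mem_image, Finset.mem_univ]
    constructor
    · rintro ⟨_, hvF⟩
      rcases mem_Fr.1 hvF with rfl | ⟨i, rfl⟩
      · exact Or.inl rfl
      · exact Or.inr ⟨i, rfl⟩
    · rintro (rfl | ⟨i, rfl⟩)
      · exact ⟨oneV_ne_zero (by omega), mem_Fr.2 (Or.inl rfl)⟩
      · exact ⟨sing_ne_zero i, mem_Fr.2 (Or.inr ⟨i, rfl⟩)⟩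
  rw [heq, Finset.card_insert_of_notMem ?hnm, Finset.card_image_of_injective _
    (sing_injective (k := k)), Finset.card_univ, Fintype.card_fin]
  case hnm =>
    intro hmem
    obtain ⟨i, _, hi⟩ := Finset.mem_image.1 hmem
    exact oneV_ne_sing (by omega) i hi.symm

end Stmt10Aux

/-- For `k ≥ 5`, `m_2^{(k-3)}(k, k-2) = k+1`: a projective frame gives `k+1` points of
`PG(k-1,2)` with at most `k-2` points in every subspace of codimension `2`, and no multiset
of points with this property has total multiplicity exceeding `k+1`. -/
theorem stmt10 {k : ℕ} (hk : 5 ≤ k) :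
    ((∀ S : Submodule (ZMod 2) (Fin k → ZMod 2), finrank (ZMod 2) S = k - 2 →
        msMult (frameK k) S ≤ k - 2) ∧ msMult (frameK k) ⊤ = k + 1) ∧
    (∀ K : Submodule (ZMod 2) (Fin k → ZMod 2) → ℕ,
      (∀ S : Submodule (ZMod 2) (Fin k → ZMod 2), finrank (ZMod 2) S = k - 2 →
        msMult K S ≤ k - 2) → msMult K ⊤ ≤ k + 1) :=
  ⟨⟨fun S hS => Stmt10Aux.frame_constraint hk S hS, Stmt10Aux.frame_total hk⟩,
    fun K hK => Stmt10Aux.upper_bound hk K hK⟩
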